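/- Let Ã ∈ ℝ^{N×N} be such that 0 is an eigenvalue of Ã with algebraic multiplicity 1 and every nonzero complex eigenvalue of Ã has negative real part, and let ψ, φ ∈ ℝ^N satisfy Ãψ = 0, φᵀÃ = 0 and φᵀψ = 1. Let K̂ ∈ ℝ^{N×M}, and let Ŵ ∈ ℝ^{M×M} be a matrix all of whose complex eigenvalues have negative real part. Set M̂ = [[Ã, −K̂],[0, Ŵ]]. Then for all x̄₀ ∈ ℝ^N and e₀ ∈ ℝ^M, exp(tM̂)·[x̄₀; e₀] converges as t → ∞ to (φᵀ(x̄₀ + K̂Ŵ⁻¹e₀))·[ψ; 0_M]. -/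

import Mathlib

open Matrix Filter Topology Polynomial NormedSpace

namespace BlockExpAux

variable {n : Type*} [Fintype n] [DecidableEq n]

attribute [local instance] Matrix.linftyOpNormedAddCommGroup Matrix.linftyOpNormedRing
  Matrix.linftyOpNormedAlgebra

noncomputable def mulVecCLM (w : n → ℂ) : Matrix n n ℂ →L[ℂ] (n → ℂ) :=
  LinearMap.toContinuousLinearMap
    { toFun := fun A => A *ᵥ w
      map_add' := fun A B => Matrix.add_mulVec A B w
      map_smul' := fun c A => Matrix.smul_mulVec c A w }

lemma exp_smul_mulVec_of_pow (B : Matrix n n ℂ) (μ c : ℂ) (m : ℕ) (w : n → ℂ)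
    (hw : ((B - μ • 1) ^ m) *ᵥ w = 0) :
    exp (c • B) *ᵥ w
      = Complex.exp (c * μ) • ∑ j ∈ Finset.range m,
          ((c ^ j * (j.factorial : ℂ)⁻¹) • (((B - μ • 1) ^ j) *ᵥ w)) := by
  have hBsplit : c • B = (c * μ) • (1 : Matrix n n ℂ) + c • (B - μ • 1) := by
    rw [smul_sub, smul_smul, add_sub_cancel]
  have hcomm : Commute ((c * μ) • (1 : Matrix n n ℂ)) (c • (B - μ • 1)) :=
    ((Commute.one_left _).smul_left _).smul_right _
  have h1 : exp ((c * μ) • (1 : Matrix n n ℂ)) = Complex.exp (c * μ) • 1 := by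
    have h := algebraMap_exp_comm (𝕂 := ℂ) (𝔸 := Matrix n n ℂ) (c * μ)
    rw [Complex.exp_eq_exp_ℂ]
    simp [Algebra.algebraMap_eq_smul_one] at h
    exact h.symm
  have h2 : exp (c • (B - μ • 1)) *ᵥ w
      = ∑ j ∈ Finset.range m, ((c ^ j * (j.factorial : ℂ)⁻¹) • (((B - μ • 1) ^ j) *ᵥ w)) := by
    set N := B - μ • 1 with hN
    have hsum := expSeries_summable' (𝕂 := ℂ) (c • N)
    have hmap : exp (c • N) *ᵥ w = ∑' k : ℕ, (((k.factorial : ℂ)⁻¹) • (c • N) ^ k) *ᵥ w := by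
      have := (mulVecCLM (n := n) w).map_tsum hsum
      rw [exp_eq_tsum (𝕂 := ℂ)]
      exact this
    rw [hmap]
    have hterm : ∀ k : ℕ, (((k.factorial : ℂ)⁻¹) • (c • N) ^ k) *ᵥ w
        = (c ^ k * (k.factorial : ℂ)⁻¹) • (N ^ k *ᵥ w) := by
      intro k
      simp [_root_.smul_pow, Matrix.smul_mulVec, smul_smul, mul_comm]
    simp only [hterm]
    refine tsum_eq_sum ?_
    intro j hj
    rw [Finset.mem_range, not_lt] at hj
    have hpow : N ^ j = N ^ (j - m) * N ^ m := by rw [← pow_add, Nat.sub_add_cancel hj]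
    rw [hpow, ← Matrix.mulVec_mulVec, hw, Matrix.mulVec_zero, smul_zero]
  rw [hBsplit]
  erw [exp_add_of_commute hcomm]
  rw [← Matrix.mulVec_mulVec]
  erw [h2, h1]
  rw [
    Matrix.smul_mulVec, Matrix.one_mulVec]


lemma tendsto_cexp_pow (j : ℕ) (μ : ℂ) (hμ : μ.re < 0) :
    Tendsto (fun t : ℝ => Complex.exp ((t:ℂ) * μ) * (t:ℂ) ^ j) atTop (𝓝 0) := by
  have hc : (0:ℝ) < -μ.re := by linarith
  have h1 : Tendsto (fun t : ℝ => ((-μ.re) * t) ^ j * Real.exp (-((-μ.re) * t))) atTop (𝓝 0) :=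
    (Real.tendsto_pow_mul_exp_neg_atTop_nhds_zero j).comp (tendsto_id.const_mul_atTop hc)
  have h2 := h1.const_mul (((-μ.re) ^ j)⁻¹)
  rw [mul_zero] at h2
  have key : Tendsto (fun t : ℝ => t ^ j * Real.exp (μ.re * t)) atTop (𝓝 0) := by
    refine h2.congr (fun t => ?_)
    have hne : (-μ.re) ^ j ≠ 0 := pow_ne_zero _ (by linarith)
    rw [mul_pow]
    have : -(-μ.re * t) = μ.re * t := by ring
    rw [this]
    field_simp
  rw [tendsto_zero_iff_norm_tendsto_zero]
  refine key.congr' ?_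
  filter_upwards [eventually_ge_atTop (0:ℝ)] with t ht
  rw [norm_mul, norm_pow, Complex.norm_exp,
    Complex.norm_of_nonneg ht]
  have : ((t:ℂ) * μ).re = μ.re * t := by simp [Complex.mul_re, mul_comm]
  rw [this, mul_comm]

lemma tendsto_exp_mulVec_zero_of_pow (B : Matrix n n ℂ) (μ : ℂ) (hμ : μ.re < 0)
    (m : ℕ) (w : n → ℂ) (hw : ((B - μ • 1) ^ m) *ᵥ w = 0) :
    Tendsto (fun t : ℝ => exp ((t:ℂ) • B) *ᵥ w) atTop (𝓝 0) := by
  have heq : (fun t : ℝ => exp ((t:ℂ) • B) *ᵥ w)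
      = fun t : ℝ => ∑ j ∈ Finset.range m,
          ((Complex.exp ((t:ℂ) * μ) * (t:ℂ) ^ j * (j.factorial:ℂ)⁻¹) • (((B - μ • 1) ^ j) *ᵥ w)) := by
    funext t
    rw [exp_smul_mulVec_of_pow B μ (t:ℂ) m w hw, Finset.smul_sum]
    refine Finset.sum_congr rfl (fun j _ => ?_)
    rw [smul_smul, mul_assoc]
  rw [heq]
  have h0 : (0 : n → ℂ) = ∑ j ∈ Finset.range m, (0 : n → ℂ) := by simp
  rw [h0]
  refine tendsto_finset_sum _ (fun j hj => ?_)
  have := ((tendsto_cexp_pow j μ hμ).mul_const ((j.factorial:ℂ)⁻¹)).smul_const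
    (((B - μ • 1) ^ j) *ᵥ w)
  simpa using this

lemma tendsto_exp_mulVec_zero_of_aeval (B : Matrix n n ℂ) (p : Polynomial ℂ) (hp : p ≠ 0)
    (hroots : ∀ μ : ℂ, p.IsRoot μ → μ.re < 0) (w : n → ℂ)
    (hw : (Polynomial.aeval B p) *ᵥ w = 0) :
    Tendsto (fun t : ℝ => exp ((t:ℂ) • B) *ᵥ w) atTop (𝓝 0) := by
  suffices H : ∀ d (p : Polynomial ℂ), p.natDegree = d → p ≠ 0 →
      (∀ μ, p.IsRoot μ → μ.re < 0) → ∀ w : n → ℂ, (Polynomial.aeval B p) *ᵥ w = 0 →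
      Tendsto (fun t : ℝ => exp ((t:ℂ) • B) *ᵥ w) atTop (𝓝 0) by
    exact H _ p rfl hp hroots w hw
  intro d
  induction d using Nat.strong_induction_on with
  | _ d ih =>
  intro p hd hp hroots w hw
  by_cases hroot : ∃ μ, p.IsRoot μ
  · obtain ⟨μ, hμroot⟩ := hroot
    set m := p.rootMultiplicity μ with hm
    obtain ⟨q, hq, hndvd⟩ := p.exists_eq_pow_rootMultiplicity_mul_and_not_dvd hp μ
    rw [← hm] at hq
    have hq0 : q ≠ 0 := fun h => hp (by rw [hq, h, mul_zero])
    have hm1 : 1 ≤ m := (rootMultiplicity_pos hp).2 hμroot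
    have hcop : IsCoprime ((X - C μ) ^ m) q :=
      (((irreducible_X_sub_C μ).coprime_iff_not_dvd).2 hndvd).pow_left
    obtain ⟨a, b, hab⟩ := hcop
    have hsplit : w = (aeval B (b * q)) *ᵥ w + (aeval B (a * (X - C μ) ^ m)) *ᵥ w := by
      have h' := congrArg (fun r => (Polynomial.aeval B r) *ᵥ w) hab
      simp only [map_add, Matrix.add_mulVec, _root_.map_one, Matrix.one_mulVec] at h'
      conv_lhs => rw [← h']
      abel
    set w2 := (aeval B (b * q)) *ᵥ w with hw2def
    set w1 := (aeval B (a * (X - C μ) ^ m)) *ᵥ w with hw1def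
    have hker2 : ((B - μ • 1) ^ m) *ᵥ w2 = 0 := by
      have haev : Polynomial.aeval B ((X - C μ) ^ m) = (B - μ • 1) ^ m := by
        rw [map_pow, map_sub, aeval_X, aeval_C, Algebra.algebraMap_eq_smul_one]
      rw [hw2def, ← haev, Matrix.mulVec_mulVec, ← _root_.map_mul]
      have : (X - C μ) ^ m * (b * q) = b * p := by rw [hq]; ring
      rw [this, _root_.map_mul, ← Matrix.mulVec_mulVec, hw, Matrix.mulVec_zero]
    have hker1 : (aeval B q) *ᵥ w1 = 0 := by
      rw [hw1def, Matrix.mulVec_mulVec, ← _root_.map_mul]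
      have : q * (a * (X - C μ) ^ m) = a * p := by rw [hq]; ring
      rw [this, _root_.map_mul, ← Matrix.mulVec_mulVec, hw, Matrix.mulVec_zero]
    have hdeg : q.natDegree < d := by
      have hpd : p.natDegree = m + q.natDegree := by
        rw [hq, natDegree_mul (pow_ne_zero _ (X_sub_C_ne_zero μ)) hq0, natDegree_pow,
          natDegree_X_sub_C, mul_one]
      omega
    have h2 : Tendsto (fun t : ℝ => exp ((t:ℂ) • B) *ᵥ w2) atTop (𝓝 0) :=
      tendsto_exp_mulVec_zero_of_pow B μ (hroots μ hμroot) m w2 hker2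
    have h1 : Tendsto (fun t : ℝ => exp ((t:ℂ) • B) *ᵥ w1) atTop (𝓝 0) := by
      refine ih q.natDegree hdeg q rfl hq0 (fun ν hν => hroots ν ?_) w1 hker1
      show p.eval ν = 0
      rw [hq, eval_mul, hν.eq_zero, mul_zero]
    have heq : (fun t : ℝ => exp ((t:ℂ) • B) *ᵥ w)
        = fun t : ℝ => exp ((t:ℂ) • B) *ᵥ w2 + exp ((t:ℂ) • B) *ᵥ w1 := by
      funext t
      conv_lhs => rw [hsplit]
      rw [Matrix.mulVec_add]
    rw [heq]
    simpa using h2.add h1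
  · push_neg at hroot
    have hd0 : p.natDegree = 0 := by
      by_contra h
      obtain ⟨μ, hμ⟩ := Complex.exists_root (natDegree_pos_iff_degree_pos.mp (Nat.pos_of_ne_zero h))
      exact hroot μ hμ
    obtain ⟨c, rfl⟩ := natDegree_eq_zero.mp hd0
    have hc : c ≠ 0 := fun h => hp (by rw [h, map_zero])
    have hw0 : w = 0 := by
      have hcw : (Polynomial.aeval B (C c)) *ᵥ w = c • w := by
        rw [aeval_C, Algebra.algebraMap_eq_smul_one, Matrix.smul_mulVec,
          Matrix.one_mulVec]
      rw [hcw] at hw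
      exact (smul_eq_zero.mp hw).resolve_left hc
    simp [hw0, Matrix.mulVec_zero, tendsto_const_nhds]


lemma vecMul_aeval (B : Matrix n n ℂ) (Φ : n → ℂ) (hΦ : Φ ᵥ* B = 0) (r : Polynomial ℂ) :
    Φ ᵥ* (Polynomial.aeval B r) = r.eval 0 • Φ := by
  have hpow : ∀ i : ℕ, Φ ᵥ* (B ^ i) = if i = 0 then Φ else 0 := by
    intro i
    induction i with
    | zero => simp [Matrix.vecMul_one]
    | succ i ihp =>
      rw [pow_succ, ← Matrix.vecMul_vecMul, ihp]
      by_cases h : i = 0 <;> simp [h, hΦ, Matrix.zero_vecMul]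
  induction r using Polynomial.induction_on' with
  | add p q hp hq =>
    rw [map_add, Matrix.vecMul_add, hp, hq, eval_add, add_smul]
  | monomial i c =>
    rw [aeval_monomial, Algebra.algebraMap_eq_smul_one, smul_mul_assoc, one_mul]
    have hsm : Φ ᵥ* (c • B ^ i) = c • (Φ ᵥ* B ^ i) := by
      ext j
      simp [Matrix.vecMul, dotProduct, Finset.mul_sum, mul_left_comm]
    rw [hsm, hpow, eval_monomial]
    by_cases h : i = 0
    · simp [h]
    · simp [h, zero_pow h]

lemma main_complex (B : Matrix n n ℂ) (Ψ Φ : n → ℂ)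
    (hΨ : B *ᵥ Ψ = 0) (hΦ : Φ ᵥ* B = 0) (hpair : Φ ⬝ᵥ Ψ = 1)
    (hmult : B.charpoly.rootMultiplicity 0 = 1)
    (hneg : ∀ μ : ℂ, μ ≠ 0 → (∃ u : n → ℂ, u ≠ 0 ∧ B *ᵥ u = μ • u) → μ.re < 0)
    (v : n → ℂ) :
    Tendsto (fun t : ℝ => exp ((t:ℂ) • B) *ᵥ v) atTop (𝓝 ((Φ ⬝ᵥ v) • Ψ)) := by
  classical
  have hΨne : Ψ ≠ 0 := by
    intro h
    rw [h, dotProduct_zero] at hpair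
    exact one_ne_zero hpair.symm
  set f : Module.End ℂ (n → ℂ) := Matrix.toLinAlgEquiv' B with hf
  have hfapp : ∀ u : n → ℂ, f u = B *ᵥ u := fun u => Matrix.toLinAlgEquiv'_apply B u
  have hfpow : ∀ (k : ℕ) (u : n → ℂ), (f ^ k) u = (B ^ k) *ᵥ u := by
    intro k u
    rw [hf, ← map_pow, Matrix.toLinAlgEquiv'_apply]
  have hcharf : f.charpoly = B.charpoly := by
    rw [← LinearMap.charpoly_toMatrix (f : (n → ℂ) →ₗ[ℂ] (n → ℂ)) (Pi.basisFun ℂ n)]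
    congr 1
    rw [LinearMap.toMatrix_eq_toMatrix']
    have hfl : (f : (n → ℂ) →ₗ[ℂ] (n → ℂ)) = Matrix.toLin' B := by
      apply LinearMap.ext; intro u
      rw [hfapp, Matrix.toLin'_apply]
    rw [hfl, LinearMap.toMatrix'_toLin']
  have hΨmem : Ψ ∈ f.maxGenEigenspace 0 := by
    rw [Module.End.mem_maxGenEigenspace]
    exact ⟨1, by simp [hfapp, hΨ]⟩
  have hfinrank : Module.finrank ℂ (f.maxGenEigenspace 0) = 1 := by
    rw [LinearMap.finrank_maxGenEigenspace_zero_eq, ← rootMultiplicity_eq_natTrailingDegree',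
      hcharf, hmult]
  have hspan : Submodule.span ℂ {Ψ} = f.maxGenEigenspace 0 := by
    apply Submodule.eq_of_le_of_finrank_le
    · rw [Submodule.span_le, Set.singleton_subset_iff]; exact hΨmem
    · rw [hfinrank, finrank_span_singleton hΨne]
  have hint : IsIntegral ℂ f := LinearMap.isIntegral f
  set P := minpoly ℂ f with hP
  have hPne : P ≠ 0 := minpoly.ne_zero hint
  have hev0 : Module.End.HasEigenvalue f 0 :=
    Module.End.hasEigenvalue_of_hasEigenvector
      ⟨Module.End.mem_eigenspace_iff.mpr (by rw [hfapp, hΨ, zero_smul]), hΨne⟩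
  have hroot0 : P.IsRoot 0 := Module.End.isRoot_of_hasEigenvalue hev0
  set k := P.rootMultiplicity 0 with hk
  obtain ⟨q, hq, hndvd⟩ := P.exists_eq_pow_rootMultiplicity_mul_and_not_dvd hPne 0
  rw [← hk] at hq
  rw [Polynomial.C_0, sub_zero] at hq hndvd
  have hk1 : 1 ≤ k := (rootMultiplicity_pos hPne).2 hroot0
  have hq0ne : q.eval 0 ≠ 0 := by
    intro h
    exact hndvd (X_dvd_iff.mpr (by rwa [coeff_zero_eq_eval_zero]))
  have hqne : q ≠ 0 := fun h => hq0ne (by rw [h, eval_zero])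
  obtain ⟨a, b, hab⟩ : IsCoprime ((X : Polynomial ℂ) ^ k) q :=
    ((prime_X.coprime_iff_not_dvd).2 hndvd).pow_left
  have haevP : Polynomial.aeval B P = 0 := by
    apply (Matrix.toLinAlgEquiv' (n := n) (R := ℂ)).injective
    rw [map_zero]
    have h2 := Polynomial.aeval_algHom_apply
      (Matrix.toLinAlgEquiv' (n := n) (R := ℂ)).toAlgHom B P
    erw [← h2]
    exact minpoly.aeval ℂ f
  -- decomposition
  set v0 := (Polynomial.aeval B (b * q)) *ᵥ v with hv0
  set v1 := (Polynomial.aeval B (a * X ^ k)) *ᵥ v with hv1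
  have hsplit : v = v0 + v1 := by
    have h' := congrArg (fun r => (Polynomial.aeval B r) *ᵥ v) hab
    simp only [map_add, Matrix.add_mulVec, _root_.map_one, Matrix.one_mulVec] at h'
    conv_lhs => rw [← h']
    abel
  have hker0 : (B ^ k) *ᵥ v0 = 0 := by
    have haevX : Polynomial.aeval B ((X : Polynomial ℂ) ^ k) = B ^ k := by
      rw [map_pow, aeval_X]
    rw [hv0, ← haevX, Matrix.mulVec_mulVec, ← _root_.map_mul]
    have he : (X : Polynomial ℂ) ^ k * (b * q) = b * P := by rw [hq]; ring
    rw [he, _root_.map_mul, haevP, mul_zero, Matrix.zero_mulVec]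
  have hker1 : (Polynomial.aeval B q) *ᵥ v1 = 0 := by
    rw [hv1, Matrix.mulVec_mulVec, ← _root_.map_mul]
    have he : q * (a * X ^ k) = a * P := by rw [hq]; ring
    rw [he, _root_.map_mul, haevP, mul_zero, Matrix.zero_mulVec]
  -- v0 is a multiple of Ψ
  have hv0mem : v0 ∈ Submodule.span ℂ {Ψ} := by
    rw [hspan, Module.End.mem_maxGenEigenspace]
    refine ⟨k, ?_⟩
    simp only [zero_smul, sub_zero]
    rw [hfpow, hker0]
  obtain ⟨c, hc⟩ := Submodule.mem_span_singleton.mp hv0mem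
  have hBv0 : B *ᵥ v0 = 0 := by
    rw [← hc, Matrix.mulVec_smul, hΨ, smul_zero]
  -- the coefficient
  have hcoeff : Φ ⬝ᵥ v0 = Φ ⬝ᵥ v := by
    rw [hv0, Matrix.dotProduct_mulVec, vecMul_aeval B Φ hΦ, smul_dotProduct]
    have : (b * q).eval 0 = 1 := by
      have := congrArg (fun r : Polynomial ℂ => r.eval 0) hab
      simpa [zero_pow (by omega : k ≠ 0)] using this
    rw [this, one_smul]
  have hv0eq : v0 = (Φ ⬝ᵥ v) • Ψ := by
    rw [← hcoeff, ← hc, dotProduct_smul, hpair]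
    simp
  -- exp fixes v0
  have hfix : ∀ t : ℝ, exp ((t:ℂ) • B) *ᵥ v0 = v0 := by
    intro t
    have h := exp_smul_mulVec_of_pow B 0 (t:ℂ) 1 v0 (by simpa using hBv0)
    simpa using h
  -- v1 decays
  have hdecay : Tendsto (fun t : ℝ => exp ((t:ℂ) • B) *ᵥ v1) atTop (𝓝 0) := by
    refine tendsto_exp_mulVec_zero_of_aeval B q hqne (fun ν hν => ?_) v1 hker1
    have hν0 : ν ≠ 0 := fun h => hq0ne (by rw [h] at hν; exact hν.eq_zero)
    have hνP : P.IsRoot ν := by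
      show P.eval ν = 0
      rw [hq, eval_mul, hν.eq_zero, mul_zero]
    have hev : Module.End.HasEigenvalue f ν := Module.End.hasEigenvalue_of_isRoot hνP
    obtain ⟨u, hu⟩ := hev.exists_hasEigenvector
    refine hneg ν hν0 ⟨u, hu.2, ?_⟩
    rw [← hfapp]
    exact Module.End.mem_eigenspace_iff.mp hu.1
  -- combine
  have heq : (fun t : ℝ => exp ((t:ℂ) • B) *ᵥ v)
      = fun t : ℝ => v0 + exp ((t:ℂ) • B) *ᵥ v1 := by
    funext t
    conv_lhs => rw [hsplit]
    rw [Matrix.mulVec_add, hfix]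
  rw [heq, ← hv0eq]
  simpa using (tendsto_const_nhds (x := v0)).add hdecay


def cvec {α : Type*} (x : α → ℝ) : α → ℂ := fun i => (x i : ℂ)

lemma cvec_eq_zero {α : Type*} {x : α → ℝ} (h : cvec x = 0) : x = 0 := by
  funext i
  have := congrFun h i
  simpa [cvec] using this

lemma cvec_mulVec {m' n' : Type*} [Fintype n'] (R : Matrix m' n' ℝ) (x : n' → ℝ) :
    (R.map (Complex.ofReal)) *ᵥ (cvec x) = cvec (R *ᵥ x) := by
  funext i
  simp [cvec, Matrix.mulVec, dotProduct, Matrix.map_apply]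

lemma cvec_vecMul {m' n' : Type*} [Fintype m'] (R : Matrix m' n' ℝ) (x : m' → ℝ) :
    (cvec x) ᵥ* (R.map (Complex.ofReal)) = cvec (x ᵥ* R) := by
  funext i
  simp [cvec, Matrix.vecMul, dotProduct, Matrix.map_apply]

lemma cvec_dot {α : Type*} [Fintype α] (x y : α → ℝ) :
    (cvec x) ⬝ᵥ (cvec y) = ((x ⬝ᵥ y : ℝ) : ℂ) := by
  simp [cvec, dotProduct]

lemma cvec_smul {α : Type*} (c : ℝ) (x : α → ℝ) :
    cvec (c • x) = (c : ℂ) • cvec x := by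
  funext i
  simp [cvec]

lemma map_exp_ofReal (R : Matrix n n ℝ) :
    (exp R).map Complex.ofReal = exp (R.map Complex.ofReal) := by
  letI : SeminormedRing (Matrix n n ℝ) := Matrix.linftyOpSemiNormedRing
  letI : NormedRing (Matrix n n ℝ) := Matrix.linftyOpNormedRing
  letI : NormedAlgebra ℝ (Matrix n n ℝ) := Matrix.linftyOpNormedAlgebra
  letI : NormedAlgebra ℝ (Matrix n n ℂ) := Matrix.linftyOpNormedAlgebra
  have hcont : Continuous (Complex.ofRealAm.mapMatrix (m := n) :
      Matrix n n ℝ →ₐ[ℝ] Matrix n n ℂ) :=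
    LinearMap.continuous_of_finiteDimensional
      (Complex.ofRealAm.mapMatrix (m := n)).toLinearMap
  have h := map_exp (Complex.ofRealAm.mapMatrix (m := n)) hcont R
  have hc : ((Complex.ofRealAm.mapMatrix (m := n)) (exp R))
      = (exp R).map Complex.ofReal := rfl
  have hc2 : ((Complex.ofRealAm.mapMatrix (m := n)) R) = R.map Complex.ofReal := rfl
  erw [hc, hc2] at h
  exact h

end BlockExpAux

open BlockExpAux Polynomial in
/-- Let `Ã` have `0` as an algebraically simple eigenvalue with all nonzero eigenvalues of
negative real part, right/left eigenvectors `ψ, φ` normalized by `φᵀψ = 1`, and `Ŵ` Hurwitz.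
Then for `M̂ = [[Ã, −K̂],[0, Ŵ]]`, `exp(tM̂)[x̄₀; e₀] → (φᵀ(x̄₀ + K̂Ŵ⁻¹e₀))·[ψ; 0]`. -/
theorem block_matrix_exp_convergence {N M : ℕ}
    (Atil : Matrix (Fin N) (Fin N) ℝ)
    (hmult : Atil.charpoly.rootMultiplicity 0 = 1)
    (hnegA : ∀ μ : ℂ, μ ≠ 0 →
      (∃ v : Fin N → ℂ, v ≠ 0 ∧ Atil.map (Complex.ofReal) *ᵥ v = μ • v) → μ.re < 0)
    (ψ φ : Fin N → ℝ) (hψ : Atil *ᵥ ψ = 0) (hφ : φ ᵥ* Atil = 0) (hpair : φ ⬝ᵥ ψ = 1)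
    (Khat : Matrix (Fin N) (Fin M) ℝ) (What : Matrix (Fin M) (Fin M) ℝ)
    (hW : ∀ μ : ℂ, (∃ v : Fin M → ℂ, v ≠ 0 ∧ What.map (Complex.ofReal) *ᵥ v = μ • v) →
      μ.re < 0)
    (Mhat : Matrix (Fin N ⊕ Fin M) (Fin N ⊕ Fin M) ℝ)
    (hM : Mhat = Matrix.fromBlocks Atil (-Khat) 0 What)
    (x0 : Fin N → ℝ) (e0 : Fin M → ℝ) :
    Tendsto (fun t : ℝ => NormedSpace.exp (t • Mhat) *ᵥ Sum.elim x0 e0) atTop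
      (𝓝 ((φ ⬝ᵥ (x0 + (Khat * What⁻¹) *ᵥ e0)) • Sum.elim ψ (0 : Fin M → ℝ))) := by
  classical
  -- W is invertible
  have hWdet : IsUnit What.det := by
    rw [isUnit_iff_ne_zero]
    intro hdet
    obtain ⟨u, hune, hu⟩ := Matrix.exists_mulVec_eq_zero_iff.mpr hdet
    have h0 : (0:ℂ).re < 0 := by
      refine hW 0 ⟨cvec u, fun h => hune (cvec_eq_zero h), ?_⟩
      rw [cvec_mulVec, hu, zero_smul]
      funext i; simp [cvec]
    simp at h0
  -- block identities over ℝ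
  set ΨR : (Fin N ⊕ Fin M) → ℝ := Sum.elim ψ 0 with hΨR
  set ΦR : (Fin N ⊕ Fin M) → ℝ := Sum.elim φ (φ ᵥ* (Khat * What⁻¹)) with hΦR
  have hψR : Mhat *ᵥ ΨR = 0 := by
    rw [hM, hΨR, Matrix.fromBlocks_mulVec]
    funext i
    cases i <;> simp [hψ]
  have hφR : ΦR ᵥ* Mhat = 0 := by
    rw [hM, hΦR, Matrix.vecMul_fromBlocks]
    have hl : (Sum.elim φ (φ ᵥ* (Khat * What⁻¹))) ∘ Sum.inl = φ := Sum.elim_comp_inl _ _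
    have hr : (Sum.elim φ (φ ᵥ* (Khat * What⁻¹))) ∘ Sum.inr = φ ᵥ* (Khat * What⁻¹) :=
      Sum.elim_comp_inr _ _
    rw [hl, hr]
    have hKW : (φ ᵥ* (Khat * What⁻¹)) ᵥ* What = φ ᵥ* Khat := by
      rw [Matrix.vecMul_vecMul, Matrix.mul_assoc, Matrix.nonsing_inv_mul What hWdet,
        Matrix.mul_one]
    funext i
    cases i with
    | inl i => simp [hφ, Matrix.vecMul_zero]
    | inr i => simp [hKW, Matrix.vecMul_neg]
  have hpairR : ΦR ⬝ᵥ ΨR = 1 := by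
    rw [hΨR, hΦR, sumElim_dotProduct_sumElim]
    simp [hpair]
  -- the complexified matrix
  set B : Matrix (Fin N ⊕ Fin M) (Fin N ⊕ Fin M) ℂ := Mhat.map Complex.ofReal with hB
  have hBblocks : B = Matrix.fromBlocks (Atil.map Complex.ofReal)
      (-(Khat.map Complex.ofReal)) 0 (What.map Complex.ofReal) := by
    have hneg : (-Khat).map (Complex.ofReal) = -(Khat.map Complex.ofReal) := by
      funext i j; simp [Matrix.map_apply]
    have h0 : (0 : Matrix (Fin M) (Fin N) ℝ).map Complex.ofReal = 0 := by
      funext i j; simp [Matrix.map_apply]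
    rw [hB, hM, Matrix.fromBlocks_map, hneg, h0]
  -- multiplicity of 0 in charpoly of B
  obtain ⟨g, hg, hgnd⟩ :=
    Atil.charpoly.exists_eq_pow_rootMultiplicity_mul_and_not_dvd
      (Atil.charpoly_monic.ne_zero) 0
  rw [hmult, Polynomial.C_0, sub_zero, pow_one] at hg
  rw [Polynomial.C_0, sub_zero] at hgnd
  have hgne : g ≠ 0 := fun h => hgnd (h ▸ dvd_zero _)
  have hg0 : g.coeff 0 ≠ 0 := fun h => hgnd (X_dvd_iff.mpr h)
  have hWc0 : What.charpoly.coeff 0 ≠ 0 := by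
    intro h
    have hd := Matrix.det_eq_sign_charpoly_coeff What
    rw [h, mul_zero] at hd
    exact hWdet.ne_zero hd
  have hBchar : B.charpoly
      = X * ((g.map Complex.ofRealHom) * (What.charpoly.map Complex.ofRealHom)) := by
    have hBr : B = Mhat.map Complex.ofRealHom := rfl
    rw [hBr, Matrix.charpoly_map, hM, Matrix.charpoly_fromBlocks_zero₂₁, hg,
      Polynomial.map_mul, Polynomial.map_mul, Polynomial.map_X, mul_assoc]
  have hmultB : B.charpoly.rootMultiplicity 0 = 1 := by
    rw [hBchar]
    have hgm : (g.map Complex.ofRealHom) ≠ 0 := Polynomial.map_ne_zero hgne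
    have hwm : (What.charpoly.map Complex.ofRealHom) ≠ 0 :=
      Polynomial.map_ne_zero What.charpoly_monic.ne_zero
    have hprodne : (g.map Complex.ofRealHom)
        * (What.charpoly.map Complex.ofRealHom) ≠ 0 := mul_ne_zero hgm hwm
    rw [rootMultiplicity_mul (mul_ne_zero X_ne_zero hprodne)]
    have h1 : rootMultiplicity (0:ℂ) (X : Polynomial ℂ) = 1 := by
      have := rootMultiplicity_X_sub_C_self (x := (0:ℂ))
      rwa [Polynomial.C_0, sub_zero] at this
    have h2 : rootMultiplicity (0:ℂ)
        ((g.map Complex.ofRealHom)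
          * (What.charpoly.map Complex.ofRealHom)) = 0 := by
      apply rootMultiplicity_eq_zero
      intro hroot
      have : ((g.map Complex.ofRealHom)
          * (What.charpoly.map Complex.ofRealHom)).coeff 0 = 0 := by
        rwa [coeff_zero_eq_eval_zero]
      rw [mul_coeff_zero, Polynomial.coeff_map, Polynomial.coeff_map] at this
      rcases mul_eq_zero.mp this with h | h
      · exact hg0 (by rw [Complex.ofRealHom_eq_coe] at h; exact_mod_cast h)
      · exact hWc0 (by rw [Complex.ofRealHom_eq_coe] at h; exact_mod_cast h)
    rw [h1, h2]
  -- eigenvalue condition for B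
  have hnegB : ∀ μ : ℂ, μ ≠ 0 →
      (∃ u : (Fin N ⊕ Fin M) → ℂ, u ≠ 0 ∧ B *ᵥ u = μ • u) → μ.re < 0 := by
    rintro μ hμ ⟨u, hune, hu⟩
    set u1 : Fin N → ℂ := u ∘ Sum.inl with hu1
    set u2 : Fin M → ℂ := u ∘ Sum.inr with hu2
    have husum : u = Sum.elim u1 u2 := by funext x; cases x <;> rfl
    rw [hBblocks, husum, Matrix.fromBlocks_mulVec] at hu
    have hcompN : (Atil.map Complex.ofReal) *ᵥ u1 + (-(Khat.map Complex.ofReal)) *ᵥ u2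
        = μ • u1 := by
      funext i
      have := congrFun hu (Sum.inl i)
      simpa using this
    have hcompM : (What.map Complex.ofReal) *ᵥ u2 = μ • u2 := by
      funext i
      have := congrFun hu (Sum.inr i)
      simpa [Matrix.zero_mulVec] using this
    by_cases h2 : u2 = 0
    · have h1ne : u1 ≠ 0 := by
        intro h1
        apply hune
        rw [husum, h1, h2]
        funext x; cases x <;> rfl
      refine hnegA μ hμ ⟨u1, h1ne, ?_⟩
      rw [h2] at hcompN
      simpa [Matrix.mulVec_zero] using hcompN
    · exact hW μ ⟨u2, h2, hcompM⟩
  -- complexified eigenvector data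
  have hΨc : B *ᵥ cvec ΨR = 0 := by
    rw [hB, cvec_mulVec, hψR]
    funext i; simp [cvec]
  have hΦc : (cvec ΦR) ᵥ* B = 0 := by
    rw [hB, cvec_vecMul, hφR]
    funext i; simp [cvec]
  have hpairc : (cvec ΦR) ⬝ᵥ (cvec ΨR) = 1 := by
    rw [cvec_dot, hpairR, Complex.ofReal_one]
  -- apply the complex result
  set vv : (Fin N ⊕ Fin M) → ℝ := Sum.elim x0 e0 with hvv
  have hmain := main_complex B (cvec ΨR) (cvec ΦR) hΨc hΦc hpairc hmultB hnegB (cvec vv)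
  -- identify the exponentials
  have hexp : ∀ t : ℝ, exp ((t:ℂ) • B) *ᵥ (cvec vv)
      = cvec (NormedSpace.exp (t • Mhat) *ᵥ vv) := by
    intro t
    have hsm : ((t:ℂ) • B) = (t • Mhat).map Complex.ofReal := by
      funext i j
      simp [hB, Matrix.map_apply, Complex.real_smul]
    rw [hsm, ← map_exp_ofReal, cvec_mulVec]
  -- the limit value
  have hlim : ((cvec ΦR) ⬝ᵥ (cvec vv)) • (cvec ΨR)
      = cvec ((φ ⬝ᵥ (x0 + (Khat * What⁻¹) *ᵥ e0)) • Sum.elim ψ (0 : Fin M → ℝ)) := by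
    rw [cvec_dot, ← hΨR, cvec_smul]
    congr 2
    rw [hΦR, hvv, sumElim_dotProduct_sumElim, dotProduct_add,
      Matrix.dotProduct_mulVec]
  rw [hlim] at hmain
  simp only [hexp] at hmain
  -- transfer back to ℝ
  rw [tendsto_pi_nhds]
  intro i
  have hi := (tendsto_pi_nhds.mp hmain) i
  have := (Complex.continuous_re.tendsto _).comp hi
  simpa [cvec, Function.comp_def, hΨR] using this
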